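/- Let 0 < p ≤ 1 ≤ s < ∞ with p < s and λ > n(s/p - 1). Suppose M : R^n → C satisfies (∫_B |M|^s)^{1/s} ≤ r^{n(1/s - 1/p)} and (∫_{B^c} |M(x)|^s |x - x_B|^λ dx)^{1/s} ≤ r^{λ/s + n(1/s - 1/p)}, with B = B(x_B, r). Then for every multi-index α with |α| ≤ n(1/p - 1), we have |∫_{R^n} M(x)(x - x_B)^α dx| ≤ C r^{|α| - n(1/p - 1)}, where C depends only on n, s, p, λ. -/

import Mathlib

open MeasureTheory Metric ENNReal


/-- Hölder against the constant 1. -/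
lemma holder_one' {X : Type*} [MeasurableSpace X] (μ : Measure X) {s : ℝ} (hs : 1 ≤ s)
    {f : X → ℝ≥0∞} (hf : AEMeasurable f μ) :
    ∫⁻ x, f x ∂μ ≤ (∫⁻ x, f x ^ s ∂μ) ^ (1/s) * (μ Set.univ) ^ (1 - 1/s) := by
  rcases eq_or_lt_of_le hs with h1 | h1
  · simp [← h1]
  · have hpq : s.HolderConjugate (Real.conjExponent s) := Real.HolderConjugate.conjExponent h1
    have hq1 : 1 / Real.conjExponent s = 1 - 1/s := by
      have := hpq.inv_add_inv_eq_one
      rw [one_div, one_div]; linarith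
    have H := ENNReal.lintegral_mul_le_Lp_mul_Lq μ hpq hf
      (aemeasurable_const (b := (1:ℝ≥0∞)))
    simp only [Pi.mul_apply, mul_one, ENNReal.one_rpow, lintegral_const, one_mul] at H
    rwa [hq1] at H

/-- tail integral -/
noncomputable def tailK (n : ℕ) (c : ℝ) : ℝ≥0∞ :=
  ∫⁻ z in (ball (0:EuclideanSpace ℝ (Fin n)) 1)ᶜ, ENNReal.ofReal (‖z‖ ^ c)

lemma tailK_mono (n : ℕ) {c c₀ : ℝ} (h : c ≤ c₀) : tailK n c ≤ tailK n c₀ := by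
  apply setLIntegral_mono' measurableSet_ball.compl
  intro z hz
  have hz1 : (1:ℝ) ≤ ‖z‖ := by
    simpa [mem_ball_zero_iff] using hz
  exact ENNReal.ofReal_le_ofReal (Real.rpow_le_rpow_of_exponent_le hz1 h)

lemma tailK_lt_top (n : ℕ) {c : ℝ} (hc : c < -(n:ℝ)) : tailK n c < ∞ := by
  have hc0 : c ≤ 0 := hc.le.trans (by simp)
  have hbound : ∀ z : EuclideanSpace ℝ (Fin n), z ∈ (ball (0:EuclideanSpace ℝ (Fin n)) 1)ᶜ →
      ENNReal.ofReal (‖z‖ ^ c) ≤ ENNReal.ofReal ((2:ℝ) ^ (-c) * (1 + ‖z‖) ^ c) := by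
    intro z hz
    have hz1 : (1:ℝ) ≤ ‖z‖ := by simpa [mem_ball_zero_iff] using hz
    apply ENNReal.ofReal_le_ofReal
    have h2 : (1 + ‖z‖) / 2 ≤ ‖z‖ := by linarith
    have h3 : (0:ℝ) < (1 + ‖z‖) / 2 := by linarith
    calc ‖z‖ ^ c ≤ ((1 + ‖z‖) / 2) ^ c := Real.rpow_le_rpow_of_nonpos h3 h2 hc0
      _ = (1 + ‖z‖) ^ c / 2 ^ c := Real.div_rpow (by linarith) (by norm_num) c
      _ = (2:ℝ) ^ (-c) * (1 + ‖z‖) ^ c := by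
          rw [Real.rpow_neg (by norm_num)]
          field_simp
  calc tailK n c ≤ ∫⁻ z in (ball (0:EuclideanSpace ℝ (Fin n)) 1)ᶜ,
        ENNReal.ofReal ((2:ℝ) ^ (-c) * (1 + ‖z‖) ^ c) :=
        setLIntegral_mono' measurableSet_ball.compl hbound
    _ ≤ ∫⁻ z : EuclideanSpace ℝ (Fin n), ENNReal.ofReal ((2:ℝ) ^ (-c) * (1 + ‖z‖) ^ c) :=
        setLIntegral_le_lintegral _ _
    _ = ∫⁻ z : EuclideanSpace ℝ (Fin n),
          ENNReal.ofReal ((2:ℝ) ^ (-c)) * ENNReal.ofReal ((1 + ‖z‖) ^ c) := by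
        congr 1; funext z
        rw [ENNReal.ofReal_mul (by positivity)]
    _ = ENNReal.ofReal ((2:ℝ) ^ (-c)) * ∫⁻ z : EuclideanSpace ℝ (Fin n),
          ENNReal.ofReal ((1 + ‖z‖) ^ c) := by
        rw [lintegral_const_mul]
        fun_prop
    _ < ∞ := by
        apply ENNReal.mul_lt_top ENNReal.ofReal_lt_top
        have := finite_integral_one_add_norm
          (μ := (volume : Measure (EuclideanSpace ℝ (Fin n)))) (r := -c)
          (by rw [finrank_euclideanSpace_fin]; linarith)
        simpa using this


/-- translation -/
lemma trans_lemma (n : ℕ) (xB : EuclideanSpace ℝ (Fin n)) (r : ℝ) (F : ℝ → ℝ≥0∞) :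
    ∫⁻ x in (ball xB r)ᶜ, F ‖x - xB‖
      = ∫⁻ y in (ball (0:EuclideanSpace ℝ (Fin n)) r)ᶜ, F ‖y‖ := by
  rw [← lintegral_indicator measurableSet_ball.compl,
    ← lintegral_indicator measurableSet_ball.compl]
  rw [← lintegral_sub_right_eq_self
    (fun y => ((ball (0:EuclideanSpace ℝ (Fin n)) r)ᶜ).indicator (fun y => F ‖y‖) y) xB]
  apply lintegral_congr
  intro x
  by_cases h : x ∈ ball xB r
  · have h2 : x - xB ∈ ball (0:EuclideanSpace ℝ (Fin n)) r := by
      rw [mem_ball_zero_iff]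
      rwa [mem_ball_iff_norm] at h
    rw [Set.indicator_of_notMem (by simpa [dist_eq_norm] using h2),
      Set.indicator_of_notMem (by simpa [dist_eq_norm] using h)]
  · have h2 : x - xB ∉ ball (0:EuclideanSpace ℝ (Fin n)) r := by
      rw [mem_ball_zero_iff]
      rwa [mem_ball_iff_norm] at h
    rw [Set.indicator_of_mem (by simpa [dist_eq_norm] using h2), Set.indicator_of_mem (by simpa [dist_eq_norm] using h)]

/-- scaling -/
lemma scale_lemma (n : ℕ) (c : ℝ) {r : ℝ} (hr : 0 < r) :
    ∫⁻ y in (ball (0:EuclideanSpace ℝ (Fin n)) r)ᶜ, ENNReal.ofReal (‖y‖ ^ c)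
      = ENNReal.ofReal (r ^ ((n:ℝ) + c)) * tailK n c := by
  set F : EuclideanSpace ℝ (Fin n) → ℝ≥0∞ :=
    fun y => ((ball (0:EuclideanSpace ℝ (Fin n)) r)ᶜ).indicator
      (fun y => ENNReal.ofReal (‖y‖ ^ c)) y with hFdef
  have hFmeas : Measurable F := by
    apply Measurable.indicator _ measurableSet_ball.compl
    fun_prop
  have hsmul : ∀ z : EuclideanSpace ℝ (Fin n), F (r • z)
      = ENNReal.ofReal (r ^ c) * ((ball (0:EuclideanSpace ℝ (Fin n)) 1)ᶜ).indicator
          (fun y => ENNReal.ofReal (‖y‖ ^ c)) z := by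
    intro z
    have hnorm : ‖r • z‖ = r * ‖z‖ := by
      rw [norm_smul, Real.norm_eq_abs, abs_of_pos hr]
    by_cases h : z ∈ ball (0:EuclideanSpace ℝ (Fin n)) 1
    · have h2 : r • z ∈ ball (0:EuclideanSpace ℝ (Fin n)) r := by
        rw [mem_ball_zero_iff] at h ⊢
        rw [hnorm]
        calc r * ‖z‖ < r * 1 := mul_lt_mul_of_pos_left h hr
          _ = r := mul_one r
      show ((ball (0:EuclideanSpace ℝ (Fin n)) r)ᶜ).indicator _ (r • z) = _
      rw [Set.indicator_of_notMem (by simpa [dist_eq_norm] using h2),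
        Set.indicator_of_notMem (by simpa [dist_eq_norm] using h), mul_zero]
    · have h2 : r • z ∉ ball (0:EuclideanSpace ℝ (Fin n)) r := by
        rw [mem_ball_zero_iff] at h ⊢
        rw [hnorm]
        intro hcon
        exact h (by nlinarith)
      show ((ball (0:EuclideanSpace ℝ (Fin n)) r)ᶜ).indicator _ (r • z) = _
      rw [Set.indicator_of_mem (by simpa using h2), Set.indicator_of_mem (by simpa using h)]
      rw [hnorm, Real.mul_rpow hr.le (norm_nonneg z), ENNReal.ofReal_mul (by positivity)]
  have hmap : Measure.map (r • ·) (volume : Measure (EuclideanSpace ℝ (Fin n)))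
      = ENNReal.ofReal |(r ^ Module.finrank ℝ (EuclideanSpace ℝ (Fin n)))⁻¹| • volume :=
    Measure.map_addHaar_smul volume hr.ne'
  have hpow : |(r ^ Module.finrank ℝ (EuclideanSpace ℝ (Fin n)))⁻¹| = r ^ (-(n:ℝ)) := by
    rw [finrank_euclideanSpace_fin, abs_of_pos (by positivity),
      ← Real.rpow_natCast r n, ← Real.rpow_neg hr.le]
  rw [hpow] at hmap
  have key : ∫⁻ z, F (r • z) = ENNReal.ofReal (r ^ (-(n:ℝ))) * ∫⁻ y, F y := by
    rw [← lintegral_map hFmeas (measurable_const_smul r), hmap, lintegral_smul_measure, smul_eq_mul]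
  have hzint : ∫⁻ z, F (r • z) = ENNReal.ofReal (r ^ c) * tailK n c := by
    simp only [hsmul]
    rw [lintegral_const_mul]
    · rw [tailK, lintegral_indicator measurableSet_ball.compl]
    · apply Measurable.indicator _ measurableSet_ball.compl
      fun_prop
  have heq : ENNReal.ofReal (r ^ (-(n:ℝ))) * ∫⁻ y, F y
      = ENNReal.ofReal (r ^ c) * tailK n c := key.symm.trans hzint
  have hLHS : ∫⁻ y in (ball (0:EuclideanSpace ℝ (Fin n)) r)ᶜ, ENNReal.ofReal (‖y‖ ^ c)
      = ∫⁻ y, F y := (lintegral_indicator measurableSet_ball.compl _).symm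
  rw [hLHS]
  calc ∫⁻ y, F y
      = (ENNReal.ofReal (r ^ ((n:ℝ))) * ENNReal.ofReal (r ^ (-(n:ℝ)))) * ∫⁻ y, F y := by
        rw [← ENNReal.ofReal_mul (by positivity), ← Real.rpow_add hr]
        simp
    _ = ENNReal.ofReal (r ^ ((n:ℝ))) * (ENNReal.ofReal (r ^ c) * tailK n c) := by
        rw [mul_assoc, heq]
    _ = ENNReal.ofReal (r ^ ((n:ℝ) + c)) * tailK n c := by
        rw [← mul_assoc, ← ENNReal.ofReal_mul (by positivity), ← Real.rpow_add hr]


lemma ball_bound (n : ℕ) (p s : ℝ) (hp : 0 < p) (hs : 1 ≤ s) :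
    ∃ C1 : ℝ, 0 ≤ C1 ∧ ∀ (M : EuclideanSpace ℝ (Fin n) → ℂ) (xB : EuclideanSpace ℝ (Fin n))
      (r : ℝ), 0 < r → Measurable M →
      ((∫⁻ x in ball xB r, (‖M x‖₊ : ℝ≥0∞) ^ s) ^ (1/s)
        ≤ ENNReal.ofReal (r ^ ((n:ℝ)*(1/s - 1/p)))) →
      ∀ a : ℝ, 0 ≤ a →
        ∫⁻ x in ball xB r, (‖M x‖₊ : ℝ≥0∞) * ENNReal.ofReal (‖x - xB‖ ^ a)
          ≤ ENNReal.ofReal (C1 * r ^ (a - (n:ℝ)*(1/p-1))) := by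
  have hs0 : (0:ℝ) < s := lt_of_lt_of_le one_pos hs
  set V : ℝ≥0∞ := volume (ball (0:EuclideanSpace ℝ (Fin n)) 1) ^ (1 - 1/s) with hV
  have hVtop : V ≠ ∞ := by
    apply ENNReal.rpow_ne_top_of_nonneg
    · have : 1/s ≤ 1 := by
        rw [div_le_one hs0]; exact hs
      linarith
    · exact measure_ball_lt_top.ne
  refine ⟨V.toReal, ENNReal.toReal_nonneg, ?_⟩
  intro M xB r hr hM h1 a ha0
  have hmeas : Measurable fun x : EuclideanSpace ℝ (Fin n) => (‖M x‖₊ : ℝ≥0∞) := hM.nnnorm.coe_nnreal_ennreal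
  calc ∫⁻ x in ball xB r, (‖M x‖₊ : ℝ≥0∞) * ENNReal.ofReal (‖x - xB‖ ^ a)
      ≤ ∫⁻ x in ball xB r, (‖M x‖₊ : ℝ≥0∞) * ENNReal.ofReal (r ^ a) := by
        apply setLIntegral_mono' measurableSet_ball
        intro x hx
        have hxr : ‖x - xB‖ ≤ r := (mem_ball_iff_norm.mp hx).le
        exact mul_le_mul_right (ENNReal.ofReal_le_ofReal
          (Real.rpow_le_rpow (norm_nonneg _) hxr ha0)) _
    _ = ENNReal.ofReal (r ^ a) * ∫⁻ x in ball xB r, (‖M x‖₊ : ℝ≥0∞) := by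
        rw [lintegral_mul_const _ hmeas, mul_comm]
    _ ≤ ENNReal.ofReal (r ^ a) *
          ((∫⁻ x in ball xB r, (‖M x‖₊ : ℝ≥0∞) ^ s) ^ (1/s) * (volume (ball xB r)) ^ (1 - 1/s)) := by
        apply mul_le_mul_right
        have := holder_one' (volume.restrict (ball xB r)) hs hmeas.aemeasurable
        rwa [Measure.restrict_apply_univ] at this
    _ ≤ ENNReal.ofReal (r ^ a) *
          (ENNReal.ofReal (r ^ ((n:ℝ)*(1/s - 1/p))) * (volume (ball xB r)) ^ (1 - 1/s)) := by
        gcongr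
    _ = ENNReal.ofReal (V.toReal * r ^ (a - (n:ℝ)*(1/p-1))) := by
        rw [Measure.addHaar_ball_of_pos _ _ hr, finrank_euclideanSpace_fin,
          ENNReal.mul_rpow_of_nonneg _ _ (by
            have : 1/s ≤ 1 := by rw [div_le_one hs0]; exact hs
            linarith),
          ← Real.rpow_natCast r n, ENNReal.ofReal_rpow_of_pos (Real.rpow_pos_of_pos hr _),
          ← Real.rpow_mul hr.le, ← hV, ← ENNReal.ofReal_toReal hVtop,
          ← ENNReal.ofReal_mul (by positivity), ← ENNReal.ofReal_mul (by positivity),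
          ← ENNReal.ofReal_mul (by positivity)]
        congr 1
        have hexp : r ^ a * (r ^ ((n:ℝ)*(1/s - 1/p)) * (r ^ ((n:ℝ)*(1 - 1/s)) * V.toReal))
            = V.toReal * r ^ (a - (n:ℝ)*(1/p-1)) := by
          have h3 : r ^ a * r ^ ((n:ℝ)*(1/s - 1/p)) * r ^ ((n:ℝ)*(1 - 1/s))
              = r ^ (a - (n:ℝ)*(1/p-1)) := by
            rw [← Real.rpow_add hr, ← Real.rpow_add hr]
            congr 1
            ring
          linear_combination (norm := ring_nf) V.toReal * h3
        rw [ENNReal.toReal_ofReal ENNReal.toReal_nonneg]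
        exact hexp
    _ = ENNReal.ofReal (V.toReal * r ^ (a - (n:ℝ)*(1/p-1))) := rfl

lemma ext_bound (n : ℕ) (p s l : ℝ) (hp : 0 < p) (hp1 : p ≤ 1) (hs : 1 ≤ s)
    (hl : (n : ℝ) * (s / p - 1) < l) :
    ∃ C2 : ℝ, 0 ≤ C2 ∧ ∀ (M : EuclideanSpace ℝ (Fin n) → ℂ) (xB : EuclideanSpace ℝ (Fin n))
      (r : ℝ), 0 < r → Measurable M →
      ((∫⁻ x in (ball xB r)ᶜ, (‖M x‖₊ : ℝ≥0∞) ^ s * ENNReal.ofReal (‖x - xB‖ ^ l)) ^ (1/s)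
          ≤ ENNReal.ofReal (r ^ (l/s + (n:ℝ)*(1/s - 1/p)))) →
      ∀ a : ℝ, 0 ≤ a → a ≤ (n:ℝ)*(1/p - 1) →
        ∫⁻ x in (ball xB r)ᶜ, (‖M x‖₊ : ℝ≥0∞) * ENNReal.ofReal (‖x - xB‖ ^ a)
          ≤ ENNReal.ofReal (C2 * r ^ (a - (n:ℝ)*(1/p-1))) := by
  have hs0 : (0:ℝ) < s := lt_of_lt_of_le one_pos hs
  rcases eq_or_lt_of_le hs with hs1 | hs1
  · -- case s = 1
    subst hs1
    refine ⟨1, zero_le_one, ?_⟩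
    intro M xB r hr hM h2 a ha0 haγ
    have hγl : (n:ℝ)*(1/p - 1) < l := by
      have he : (n:ℝ) * (1 / p - 1) = (n:ℝ) * (1/p - 1) := by ring
      calc (n:ℝ)*(1/p - 1) = (n:ℝ) * (1/p - 1) := rfl
        _ < l := by
            have : (n:ℝ) * ((1:ℝ)/p - 1) = (n:ℝ) * (1/p - 1) := rfl
            simpa using hl
    norm_num [ENNReal.rpow_one] at h2
    have hmeasl : Measurable fun x : EuclideanSpace ℝ (Fin n) =>
        (‖M x‖₊ : ℝ≥0∞) * ENNReal.ofReal (‖x - xB‖ ^ l) := hM.nnnorm.coe_nnreal_ennreal.mul (by fun_prop)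
    calc ∫⁻ x in (ball xB r)ᶜ, (‖M x‖₊ : ℝ≥0∞) * ENNReal.ofReal (‖x - xB‖ ^ a)
        ≤ ∫⁻ x in (ball xB r)ᶜ,
            ((‖M x‖₊ : ℝ≥0∞) * ENNReal.ofReal (‖x - xB‖ ^ l)) * ENNReal.ofReal (r ^ (a - l)) := by
          apply setLIntegral_mono' measurableSet_ball.compl
          intro x hx
          have htr : r ≤ ‖x - xB‖ := by
            rw [Set.mem_compl_iff, mem_ball_iff_norm, not_lt] at hx
            exact hx
          have ht0 : (0:ℝ) < ‖x - xB‖ := lt_of_lt_of_le hr htr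
          have hpt : ‖x - xB‖ ^ a ≤ ‖x - xB‖ ^ l * r ^ (a - l) := by
            have h4 : ‖x - xB‖ ^ (a - l) ≤ r ^ (a - l) :=
              Real.rpow_le_rpow_of_nonpos hr htr (by linarith)
            calc ‖x - xB‖ ^ a = ‖x - xB‖ ^ l * ‖x - xB‖ ^ (a - l) := by
                  rw [← Real.rpow_add ht0]; ring_nf
              _ ≤ ‖x - xB‖ ^ l * r ^ (a - l) := by gcongr
          calc (‖M x‖₊ : ℝ≥0∞) * ENNReal.ofReal (‖x - xB‖ ^ a)
              ≤ (‖M x‖₊ : ℝ≥0∞) * ENNReal.ofReal (‖x - xB‖ ^ l * r ^ (a - l)) :=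
                mul_le_mul_right (ENNReal.ofReal_le_ofReal hpt) _
            _ = ((‖M x‖₊ : ℝ≥0∞) * ENNReal.ofReal (‖x - xB‖ ^ l)) * ENNReal.ofReal (r ^ (a - l)) := by
                rw [ENNReal.ofReal_mul (by positivity), mul_assoc]
      _ = (∫⁻ x in (ball xB r)ᶜ, (‖M x‖₊ : ℝ≥0∞) * ENNReal.ofReal (‖x - xB‖ ^ l))
            * ENNReal.ofReal (r ^ (a - l)) := lintegral_mul_const _ hmeasl
      _ ≤ ENNReal.ofReal (r ^ (l + (n:ℝ)*(1 - p⁻¹))) * ENNReal.ofReal (r ^ (a - l)) :=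
          mul_le_mul_left h2 _
      _ = ENNReal.ofReal (1 * r ^ (a - (n:ℝ)*(1/p-1))) := by
          rw [← ENNReal.ofReal_mul (by positivity), ← Real.rpow_add hr, one_mul]
          congr 1
          ring
  · -- case 1 < s
    set q := Real.conjExponent s with hqdef
    have hpq : s.HolderConjugate q := Real.HolderConjugate.conjExponent hs1
    have hq0 : 0 < q := hpq.symm.pos
    have hq1 : 1/q = 1 - 1/s := by
      have := hpq.inv_add_inv_eq_one
      rw [one_div, one_div]; linarith
    set c₀ := ((n:ℝ)*(1/p-1) - l/s) * q with hc₀def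
    have h2' : (n:ℝ)*(1/p - 1/s) < l/s := by
      rw [lt_div_iff₀ hs0]
      have he : (n:ℝ)*(1/p - 1/s)*s = (n:ℝ)*(s/p - 1) := by
        field_simp
      rw [he]; exact hl
    have h4 : (n:ℝ)*(1/p-1) - l/s < -(n:ℝ)*(1 - 1/s) := by nlinarith [h2']
    have hc₀ : c₀ < -(n:ℝ) := by
      have h5 := mul_lt_mul_of_pos_right h4 hq0
      have h6 : (-(n:ℝ)*(1-1/s))*q = -(n:ℝ) := by
        rw [← hq1, mul_assoc, one_div, inv_mul_cancel₀ hq0.ne', mul_one]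
      rw [hc₀def]
      calc ((n:ℝ)*(1/p-1) - l/s) * q < (-(n:ℝ)*(1-1/s))*q := h5
        _ = -(n:ℝ) := h6
    have hT : tailK n c₀ < ∞ := tailK_lt_top n hc₀
    have hTq : (tailK n c₀) ^ (1/q) ≠ ∞ :=
      ENNReal.rpow_ne_top_of_nonneg (by positivity) hT.ne
    refine ⟨((tailK n c₀) ^ (1/q)).toReal, ENNReal.toReal_nonneg, ?_⟩
    intro M xB r hr hM h2 a ha0 haγ
    set c := (a - l/s) * q with hcdef
    have hcc₀ : c ≤ c₀ := mul_le_mul_of_nonneg_right (by linarith) hq0.le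
    set f : EuclideanSpace ℝ (Fin n) → ℝ≥0∞ :=
      fun x => (‖M x‖₊ : ℝ≥0∞) * ENNReal.ofReal (‖x - xB‖ ^ (l/s)) with hfdef
    set g : EuclideanSpace ℝ (Fin n) → ℝ≥0∞ :=
      fun x => ENNReal.ofReal (‖x - xB‖ ^ (a - l/s)) with hgdef
    have hmeasf : Measurable f := hM.nnnorm.coe_nnreal_ennreal.mul (by fun_prop)
    have hmeasg : Measurable g := by fun_prop
    have hmemc : ∀ x : EuclideanSpace ℝ (Fin n), x ∈ (ball xB r)ᶜ → (0:ℝ) < ‖x - xB‖ := by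
      intro x hx
      rw [Set.mem_compl_iff, mem_ball_iff_norm, not_lt] at hx
      exact lt_of_lt_of_le hr hx
    -- step A
    have stepA : ∫⁻ x in (ball xB r)ᶜ, (‖M x‖₊ : ℝ≥0∞) * ENNReal.ofReal (‖x - xB‖ ^ a)
        = ∫⁻ x in (ball xB r)ᶜ, (f * g) x := by
      apply setLIntegral_congr_fun measurableSet_ball.compl
      intro x hx
      have ht0 := hmemc x hx
      simp only [Pi.mul_apply, hfdef, hgdef]
      rw [mul_assoc, ← ENNReal.ofReal_mul (by positivity), ← Real.rpow_add ht0]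
      congr 2
      ring
    -- Hölder
    have HH := ENNReal.lintegral_mul_le_Lp_mul_Lq (volume.restrict ((ball xB r)ᶜ)) hpq
      hmeasf.aemeasurable hmeasg.aemeasurable
    -- step C : first factor
    have stepC : (∫⁻ x in (ball xB r)ᶜ, f x ^ s) ^ (1/s)
        ≤ ENNReal.ofReal (r ^ (l/s + (n:ℝ)*(1/s - 1/p))) := by
      have hfs : ∫⁻ x in (ball xB r)ᶜ, f x ^ s
          = ∫⁻ x in (ball xB r)ᶜ, (‖M x‖₊ : ℝ≥0∞) ^ s * ENNReal.ofReal (‖x - xB‖ ^ l) := by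
        apply setLIntegral_congr_fun measurableSet_ball.compl
        intro x hx
        have ht0 := hmemc x hx
        simp only [hfdef]
        rw [ENNReal.mul_rpow_of_nonneg _ _ hs0.le,
          ENNReal.ofReal_rpow_of_pos (Real.rpow_pos_of_pos ht0 _),
          ← Real.rpow_mul ht0.le, div_mul_cancel₀ l hs0.ne']
      rw [hfs]
      exact h2
    -- step D : second factor
    have stepD : (∫⁻ x in (ball xB r)ᶜ, g x ^ q) ^ (1/q)
        ≤ ENNReal.ofReal (r ^ (((n:ℝ) + c)*(1/q)))
            * ENNReal.ofReal (((tailK n c₀) ^ (1/q)).toReal) := by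
      have hgq : ∫⁻ x in (ball xB r)ᶜ, g x ^ q
          = ∫⁻ x in (ball xB r)ᶜ, ENNReal.ofReal (‖x - xB‖ ^ c) := by
        apply setLIntegral_congr_fun measurableSet_ball.compl
        intro x hx
        have ht0 := hmemc x hx
        simp only [hgdef]
        rw [ENNReal.ofReal_rpow_of_pos (Real.rpow_pos_of_pos ht0 _),
          ← Real.rpow_mul ht0.le, hcdef]
      rw [hgq, trans_lemma n xB r (fun u => ENNReal.ofReal (u ^ c)), scale_lemma n c hr]
      calc (ENNReal.ofReal (r ^ ((n:ℝ) + c)) * tailK n c) ^ (1/q)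
          ≤ (ENNReal.ofReal (r ^ ((n:ℝ) + c)) * tailK n c₀) ^ (1/q) := by
            gcongr
            exact tailK_mono n hcc₀
        _ = ENNReal.ofReal (r ^ ((n:ℝ) + c)) ^ (1/q) * (tailK n c₀) ^ (1/q) :=
            ENNReal.mul_rpow_of_nonneg _ _ (by positivity)
        _ = ENNReal.ofReal (r ^ (((n:ℝ) + c)*(1/q))) * ENNReal.ofReal (((tailK n c₀) ^ (1/q)).toReal) := by
            rw [ENNReal.ofReal_rpow_of_pos (Real.rpow_pos_of_pos hr _), ← Real.rpow_mul hr.le,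
              ENNReal.ofReal_toReal hTq]
    -- combine
    have hE : (l/s + (n:ℝ)*(1/s - 1/p)) + ((n:ℝ) + c)*(1/q) = a - (n:ℝ)*(1/p-1) := by
      have h7 : q * (1/q) = 1 := mul_one_div_cancel hq0.ne'
      rw [hcdef]
      have h8 : ((n:ℝ) + (a - l/s)*q)*(1/q) = (n:ℝ)*(1/q) + (a - l/s) := by
        rw [add_mul, mul_assoc, h7, mul_one]
      rw [h8, hq1]
      ring
    calc ∫⁻ x in (ball xB r)ᶜ, (‖M x‖₊ : ℝ≥0∞) * ENNReal.ofReal (‖x - xB‖ ^ a)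
        = ∫⁻ x in (ball xB r)ᶜ, (f * g) x := stepA
      _ ≤ (∫⁻ x in (ball xB r)ᶜ, f x ^ s) ^ (1/s) * (∫⁻ x in (ball xB r)ᶜ, g x ^ q) ^ (1/q) := HH
      _ ≤ ENNReal.ofReal (r ^ (l/s + (n:ℝ)*(1/s - 1/p)))
            * (ENNReal.ofReal (r ^ (((n:ℝ) + c)*(1/q)))
                * ENNReal.ofReal (((tailK n c₀) ^ (1/q)).toReal)) := by
          exact mul_le_mul' stepC stepD
      _ = ENNReal.ofReal (((tailK n c₀) ^ (1/q)).toReal * r ^ (a - (n:ℝ)*(1/p-1))) := by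
          rw [← ENNReal.ofReal_mul (by positivity), ← ENNReal.ofReal_mul (by positivity)]
          congr 1
          have h8 : r ^ (l/s + (n:ℝ)*(1/s - 1/p)) * r ^ (((n:ℝ) + c)*(1/q))
              = r ^ (a - (n:ℝ)*(1/p-1)) := by
            rw [← Real.rpow_add hr, hE]
          linear_combination (norm := ring_nf) ((tailK n c₀) ^ (1/q)).toReal * h8


lemma mono_bound (n : ℕ) (v : EuclideanSpace ℝ (Fin n)) (α : Fin n → ℕ) :
    |∏ i, v i ^ α i| ≤ ‖v‖ ^ (∑ i, (α i : ℝ)) := by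
  have hcoord : ∀ i, |v i| ≤ ‖v‖ := by
    intro i
    rw [EuclideanSpace.norm_eq v, ← Real.sqrt_sq (abs_nonneg (v i))]
    apply Real.sqrt_le_sqrt
    rw [sq_abs]
    have := Finset.single_le_sum (f := fun j => v j ^ 2) (fun j _ => sq_nonneg _)
      (Finset.mem_univ i)
    simpa [Real.norm_eq_abs, sq_abs] using this
  have h1 : |∏ i, v i ^ α i| = ∏ i, |v i| ^ α i := by
    rw [Finset.abs_prod]
    simp [abs_pow]
  rw [h1]
  have hcast : (∑ i, (α i : ℝ)) = ((∑ i, α i : ℕ) : ℝ) := by push_cast; ring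
  rw [hcast, Real.rpow_natCast]
  calc ∏ i, |v i| ^ α i ≤ ∏ i, ‖v‖ ^ α i :=
        Finset.prod_le_prod (fun i _ => by positivity)
          (fun i _ => pow_le_pow_left₀ (abs_nonneg _) (hcoord i) _)
    _ = ‖v‖ ^ (∑ i, α i) := Finset.prod_pow_eq_pow_sum _ _ _

/-- Moments up to order `γ_p = n(1/p-1)` of a function satisfying the molecule
size conditions (M1), (M2) are bounded by `C · r^{|α| - γ_p}`. -/
theorem stmt2 (n : ℕ) (p s l : ℝ)
    (hp : 0 < p) (hp1 : p ≤ 1) (hs : 1 ≤ s) (hps : p < s)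
    (hl : (n : ℝ) * (s / p - 1) < l) :
    ∃ C : ℝ, 0 < C ∧
      ∀ (M : EuclideanSpace ℝ (Fin n) → ℂ) (xB : EuclideanSpace ℝ (Fin n)) (r : ℝ),
        0 < r → Measurable M →
        (∫⁻ x in ball xB r, (‖M x‖₊ : ℝ≥0∞) ^ s) ^ (1 / s)
          ≤ ENNReal.ofReal (r ^ ((n : ℝ) * (1 / s - 1 / p))) →
        (∫⁻ x in (ball xB r)ᶜ,
            (‖M x‖₊ : ℝ≥0∞) ^ s * ENNReal.ofReal (‖x - xB‖ ^ l)) ^ (1 / s)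
          ≤ ENNReal.ofReal (r ^ (l / s + (n : ℝ) * (1 / s - 1 / p))) →
        ∀ α : Fin n → ℕ, (∑ i, (α i : ℝ)) ≤ (n : ℝ) * (1 / p - 1) →
          ‖∫ x, M x * ((∏ i, (x i - xB i) ^ α i : ℝ) : ℂ)‖ ≤
            C * r ^ ((∑ i, (α i : ℝ)) - (n : ℝ) * (1 / p - 1)) := by
  obtain ⟨C1, hC1, Hball⟩ := ball_bound n p s hp hs
  obtain ⟨C2, hC2, Hext⟩ := ext_bound n p s l hp hp1 hs hl
  refine ⟨C1 + C2 + 1, by linarith, ?_⟩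
  intro M xB r hr hM h1 h2 α hα
  set a := ∑ i, (α i : ℝ) with hadef
  have ha0 : 0 ≤ a := Finset.sum_nonneg fun i _ => Nat.cast_nonneg _
  have key : ∫⁻ x, ENNReal.ofReal ‖M x * ((∏ i, (x i - xB i) ^ α i : ℝ) : ℂ)‖
      ≤ ENNReal.ofReal ((C1 + C2 + 1) * r ^ (a - (n:ℝ)*(1/p-1))) := by
    calc ∫⁻ x, ENNReal.ofReal ‖M x * ((∏ i, (x i - xB i) ^ α i : ℝ) : ℂ)‖
        ≤ ∫⁻ x, (‖M x‖₊ : ℝ≥0∞) * ENNReal.ofReal (‖x - xB‖ ^ a) := by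
          apply lintegral_mono
          intro x
          dsimp only
          rw [norm_mul, ENNReal.ofReal_mul (norm_nonneg _), ofReal_norm]
          apply mul_le_mul_right
          apply ENNReal.ofReal_le_ofReal
          calc ‖((∏ i, (x i - xB i) ^ α i : ℝ) : ℂ)‖ = |∏ i, (x i - xB i) ^ α i| := by
                rw [Complex.norm_real, Real.norm_eq_abs]
            _ = |∏ i, (x - xB) i ^ α i| := rfl
            _ ≤ ‖x - xB‖ ^ a := mono_bound n (x - xB) α
      _ = (∫⁻ x in ball xB r, (‖M x‖₊ : ℝ≥0∞) * ENNReal.ofReal (‖x - xB‖ ^ a))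
            + ∫⁻ x in (ball xB r)ᶜ, (‖M x‖₊ : ℝ≥0∞) * ENNReal.ofReal (‖x - xB‖ ^ a) :=
          (lintegral_add_compl _ measurableSet_ball).symm
      _ ≤ ENNReal.ofReal (C1 * r ^ (a - (n:ℝ)*(1/p-1)))
            + ENNReal.ofReal (C2 * r ^ (a - (n:ℝ)*(1/p-1))) :=
          add_le_add (Hball M xB r hr hM h1 a ha0) (Hext M xB r hr hM h2 a ha0 hα)
      _ ≤ ENNReal.ofReal ((C1 + C2 + 1) * r ^ (a - (n:ℝ)*(1/p-1))) := by
          rw [← ENNReal.ofReal_add (mul_nonneg hC1 (Real.rpow_nonneg hr.le _))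
            (mul_nonneg hC2 (Real.rpow_nonneg hr.le _))]
          apply ENNReal.ofReal_le_ofReal
          have hre : (0:ℝ) ≤ r ^ (a - (n:ℝ)*(1/p-1)) := Real.rpow_nonneg hr.le _
          nlinarith
  calc ‖∫ x, M x * ((∏ i, (x i - xB i) ^ α i : ℝ) : ℂ)‖
      ≤ (∫⁻ x, ENNReal.ofReal ‖M x * ((∏ i, (x i - xB i) ^ α i : ℝ) : ℂ)‖).toReal :=
        norm_integral_le_lintegral_norm _
    _ ≤ (C1 + C2 + 1) * r ^ (a - (n:ℝ)*(1/p-1)) :=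
        ENNReal.toReal_le_of_le_ofReal
          (mul_nonneg (by linarith) (Real.rpow_nonneg hr.le _)) key
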